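/- Let μ be a probability measure on ℝ whose cumulative distribution function G is continuous, and define the LP score functions T_j(x;G) = Leg_j(G(x)). Then the T_j are orthonormal in L²(μ): ∫ T_j(x;G) T_k(x;G) dμ(x) = 0 for j ≠ k, ∫ T_j(x;G)² dμ(x) = 1 for every j, and ∫ T_j(x;G) dμ(x) = 0 for every j ≥ 1. -/

import Mathlib

open MeasureTheory Polynomial intervalIntegral Set

/-- Shifted Legendre polynomial via the Rodrigues formula. -/
noncomputable def shiftedLegendre (n : ℕ) (u : ℝ) : ℝ :=
  (1 / n.factorial : ℝ) * iteratedDeriv n (fun x : ℝ => (x ^ 2 - x) ^ n) u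

/-- Normalized shifted Legendre polynomial `Leg n u = √(2n+1) · P n u`. -/
noncomputable def Leg (n : ℕ) (u : ℝ) : ℝ :=
  Real.sqrt (2 * n + 1) * shiftedLegendre n u

/-- LP score function of order `j` associated with a distribution function `G`. -/
noncomputable def lpScore (G : ℝ → ℝ) (j : ℕ) (x : ℝ) : ℝ := Leg j (G x)

noncomputable def Qp (n : ℕ) : ℝ[X] := ((X : ℝ[X]) ^ 2 - X) ^ n

noncomputable def Pp (n : ℕ) : ℝ[X] :=
  Polynomial.C (1 / (n.factorial : ℝ)) * (derivative^[n] (Qp n))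

lemma iteratedDeriv_eval (p : ℝ[X]) (k : ℕ) :
    iteratedDeriv k (fun x : ℝ => p.eval x) = fun u => (derivative^[k] p).eval u := by
  induction k with
  | zero => simp
  | succ k ih =>
      rw [iteratedDeriv_succ, ih, Function.iterate_succ_apply']
      funext u
      exact Polynomial.deriv _

lemma shiftedLegendre_eq (n : ℕ) (u : ℝ) : shiftedLegendre n u = (Pp n).eval u := by
  have : (fun x : ℝ => (x ^ 2 - x) ^ n) = fun x : ℝ => (Qp n).eval x := by
    funext x; simp [Qp]
  rw [_root_.shiftedLegendre, this, iteratedDeriv_eval, Pp]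
  simp

lemma poly_ibp (p q : ℝ[X]) :
    ∫ x in (0:ℝ)..1, p.eval x * (derivative q).eval x
      = p.eval 1 * q.eval 1 - p.eval 0 * q.eval 0
        - ∫ x in (0:ℝ)..1, (derivative p).eval x * q.eval x :=
  integral_mul_deriv_eq_deriv_mul_of_hasDerivAt
    p.continuousOn q.continuousOn
    (fun x _ => p.hasDerivAt x) (fun x _ => q.hasDerivAt x)
    ((derivative p).continuous.intervalIntegrable _ _)
    ((derivative q).continuous.intervalIntegrable _ _)

lemma eval_iterate_deriv_Q {n k : ℕ} (hk : k < n) {t : ℝ} (ht : t = 0 ∨ t = 1) :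
    (derivative^[k] (Qp n)).eval t = 0 := by
  have hQ : Qp n = ((X : ℝ[X]) - C 0) ^ n * ((X : ℝ[X]) - C 1) ^ n := by
    rw [Qp, ← mul_pow]; congr 1; simp; ring
  have hdvd : ((X : ℝ[X]) - C t) ^ n ∣ Qp n := by
    rcases ht with rfl | rfl
    · exact hQ ▸ dvd_mul_right _ _
    · exact hQ ▸ dvd_mul_left _ _
  obtain ⟨r, hr⟩ := pow_sub_dvd_iterate_derivative_of_pow_dvd k hdvd
  rw [hr]
  have hnk : n - k ≠ 0 := Nat.sub_ne_zero_of_lt hk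
  simp [zero_pow hnk]

lemma iter_ibp (n : ℕ) : ∀ (m : ℕ) (p : ℝ[X]), m ≤ n →
    ∫ x in (0:ℝ)..1, p.eval x * (derivative^[m] (Qp n)).eval x
      = (-1 : ℝ) ^ m * ∫ x in (0:ℝ)..1, (derivative^[m] p).eval x * (Qp n).eval x := by
  intro m
  induction m with
  | zero => intro p _; simp
  | succ m ih =>
      intro p hm
      have hmn : m < n := hm
      rw [Function.iterate_succ_apply', poly_ibp p (derivative^[m] (Qp n)),
        eval_iterate_deriv_Q hmn (Or.inr rfl), eval_iterate_deriv_Q hmn (Or.inl rfl),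
        ih (derivative p) hmn.le, ← Function.iterate_succ_apply]
      ring

lemma beta_val : ∀ (n m : ℕ), ∫ x in (0:ℝ)..1, x ^ m * (1 - x) ^ n
    = (m.factorial * n.factorial : ℝ) / ((m + n + 1).factorial) := by
  intro n
  induction n with
  | zero =>
      intro m
      simp only [pow_zero, mul_one, integral_pow, one_pow, Nat.add_zero, Nat.factorial_one,
        Nat.factorial_succ]
      push_cast
      have hm : (m.factorial : ℝ) ≠ 0 := Nat.cast_ne_zero.mpr m.factorial_ne_zero
      field_simp
      simp
  | succ n ih =>
      intro m
      have h := poly_ibp ((1 - X : ℝ[X]) ^ (n + 1)) (X ^ (m + 1))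
      have e1 : ∀ x : ℝ, ((1 - X : ℝ[X]) ^ (n + 1)).eval x * ((derivative ((X : ℝ[X]) ^ (m + 1))).eval x)
          = ((m : ℝ) + 1) * (x ^ m * (1 - x) ^ (n + 1)) := by
        intro x
        simp [derivative_X_pow]
        ring
      have e2 : ∀ x : ℝ, ((derivative ((1 - X : ℝ[X]) ^ (n + 1))).eval x) * (((X : ℝ[X]) ^ (m + 1)).eval x)
          = -(((n : ℝ) + 1) * (x ^ (m + 1) * (1 - x) ^ n)) := by
        intro x
        simp [derivative_pow]
        ring
      simp only [e1, e2] at h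
      simp only [intervalIntegral.integral_const_mul, intervalIntegral.integral_neg,
        eval_pow, eval_sub, eval_one, eval_X, one_pow, sub_self, zero_pow, mul_zero, zero_mul,
        mul_one, sub_zero, zero_sub, neg_neg, Nat.add_eq_zero, Nat.succ_ne_zero, and_false,
        not_false_iff, ne_eq, ih (m + 1)] at h
      -- h : (m+1) * B = (n+1) * ((m+1)! * n! / (m+1+n+1)!)
      have hrw : (m + 1 + n + 1) = m + (n + 1) + 1 := by omega
      rw [hrw] at h
      have hm1 : ((m : ℝ) + 1) ≠ 0 := by positivity
      apply mul_left_cancel₀ hm1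
      rw [h, Nat.factorial_succ m, Nat.factorial_succ n]
      push_cast
      ring

lemma Qp_natDegree (n : ℕ) : (Qp n).natDegree = 2 * n := by
  rw [Qp, natDegree_pow]
  have : ((X : ℝ[X]) ^ 2 - X).natDegree = 2 := by compute_degree!
  rw [this, mul_comm]

lemma Qp_monic (n : ℕ) : (Qp n).Monic := by
  have h : ((X : ℝ[X]) ^ 2 - X).Monic := by
    apply monic_X_pow_sub
    rw [degree_X]
    decide
  exact h.pow n

lemma deriv2n_Q (n : ℕ) : derivative^[2 * n] (Qp n) = C (((2 * n).factorial : ℝ)) := by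
  have h0 : (derivative^[2 * n] (Qp n)).natDegree ≤ 0 := by
    refine le_trans (natDegree_iterate_derivative _ _) ?_
    rw [Qp_natDegree]; omega
  rw [Polynomial.eq_C_of_natDegree_le_zero h0]
  congr 1
  rw [coeff_iterate_derivative]
  have hc : (Qp n).coeff (2 * n) = 1 := by
    rw [← Qp_natDegree]; exact (Qp_monic n).coeff_natDegree
  simp [hc, Nat.descFactorial_self]

lemma Pp_natDegree_le (n : ℕ) : (Pp n).natDegree ≤ n := by
  refine le_trans (natDegree_C_mul_le _ _) (le_trans (natDegree_iterate_derivative _ _) ?_)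
  rw [Qp_natDegree]; omega

lemma integral_Q (n : ℕ) :
    ∫ x in (0:ℝ)..1, (Qp n).eval x
      = (-1 : ℝ) ^ n * ((n.factorial : ℝ) ^ 2 / ((n + n + 1).factorial)) := by
  have e : ∀ x : ℝ, (Qp n).eval x = (-1 : ℝ) ^ n * (x ^ n * (1 - x) ^ n) := by
    intro x
    have h1 : (Qp n).eval x = (x ^ 2 - x) ^ n := by simp [Qp]
    have h2 : (x ^ 2 - x) = (-1) * (x * (1 - x)) := by ring
    rw [h1, h2, mul_pow, mul_pow]
  simp only [e, intervalIntegral.integral_const_mul, beta_val n n]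
  ring_nf

lemma integral_P_diag (n : ℕ) :
    ∫ x in (0:ℝ)..1, (Pp n).eval x * (Pp n).eval x = 1 / (2 * (n:ℝ) + 1) := by
  have e : ∀ x : ℝ, (Pp n).eval x * (Pp n).eval x
      = (1 / (n.factorial : ℝ)) * ((Pp n).eval x * (derivative^[n] (Qp n)).eval x) := by
    intro x
    simp only [Pp, eval_mul, eval_C]
    ring
  have hD : derivative^[n] (Pp n)
      = C ((1 / (n.factorial : ℝ)) * ((2 * n).factorial : ℝ)) := by
    rw [Pp, iterate_derivative_C_mul, ← Function.iterate_add_apply]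
    have h : n + n = 2 * n := by omega
    rw [h, deriv2n_Q, ← C_mul]
  simp only [e, intervalIntegral.integral_const_mul, iter_ibp n n (Pp n) le_rfl, hD, eval_C,
    intervalIntegral.integral_const_mul, integral_Q]
  have hnfac : ((n.factorial : ℝ)) ≠ 0 := Nat.cast_ne_zero.mpr (Nat.factorial_ne_zero _)
  have hfac : (((2 * n).factorial : ℝ)) ≠ 0 := Nat.cast_ne_zero.mpr (Nat.factorial_ne_zero _)
  have h2n1' : (2 * (n:ℝ) + 1) ≠ 0 := by positivity
  have hOdd : (((n + n + 1).factorial : ℕ) : ℝ)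
      = (2 * (n:ℝ) + 1) * (((2 * n).factorial : ℕ) : ℝ) := by
    rw [show n + n + 1 = 2 * n + 1 by omega, Nat.factorial_succ]
    push_cast; ring
  rw [hOdd]
  rcases Nat.even_or_odd n with hpar | hpar
  · rw [hpar.neg_one_pow]
    field_simp
  · rw [hpar.neg_one_pow]
    field_simp

lemma integral_P_offdiag {j k : ℕ} (h : j < k) :
    ∫ x in (0:ℝ)..1, (Pp j).eval x * (Pp k).eval x = 0 := by
  have e : ∀ x : ℝ, (Pp j).eval x * (Pp k).eval x
      = (1 / (k.factorial : ℝ)) * ((Pp j).eval x * (derivative^[k] (Qp k)).eval x) := by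
    intro x
    simp only [Pp, eval_mul, eval_C]
    ring
  have hzero : derivative^[k] (Pp j) = 0 :=
    iterate_derivative_eq_zero (lt_of_le_of_lt (Pp_natDegree_le j) h)
  simp only [e, intervalIntegral.integral_const_mul, iter_ibp k k (Pp j) le_rfl, hzero,
    eval_zero, zero_mul, intervalIntegral.integral_zero, mul_zero]

lemma integral_P_zero {j : ℕ} (hj : 1 ≤ j) :
    ∫ x in (0:ℝ)..1, (Pp j).eval x = 0 := by
  have e : ∀ x : ℝ, (Pp j).eval x
      = (1 / (j.factorial : ℝ)) * ((1 : ℝ[X]).eval x * (derivative^[j] (Qp j)).eval x) := by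
    intro x
    simp only [Pp, eval_mul, eval_C, eval_one, one_mul]
  have hzero : derivative^[j] (1 : ℝ[X]) = 0 := iterate_derivative_one hj
  simp only [e, intervalIntegral.integral_const_mul, iter_ibp j j 1 le_rfl, hzero,
    eval_zero, zero_mul, intervalIntegral.integral_zero, mul_zero]

lemma integral_Leg_mul (j k : ℕ) (h : j ≠ k) :
    ∫ u in (0:ℝ)..1, Leg j u * Leg k u = 0 := by
  have e : ∀ u : ℝ, Leg j u * Leg k u
      = (Real.sqrt (2 * j + 1) * Real.sqrt (2 * k + 1)) * ((Pp j).eval u * (Pp k).eval u) := by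
    intro u
    simp only [Leg, shiftedLegendre_eq]
    ring
  simp only [e, intervalIntegral.integral_const_mul]
  rcases lt_or_gt_of_ne h with hlt | hlt
  · rw [integral_P_offdiag hlt, mul_zero]
  · have : ∀ u : ℝ, (Pp j).eval u * (Pp k).eval u = (Pp k).eval u * (Pp j).eval u := fun u => mul_comm _ _
    simp only [this]
    rw [integral_P_offdiag hlt, mul_zero]

lemma integral_Leg_sq (j : ℕ) :
    ∫ u in (0:ℝ)..1, (Leg j u) ^ 2 = 1 := by
  have e : ∀ u : ℝ, (Leg j u) ^ 2
      = (2 * (j:ℝ) + 1) * ((Pp j).eval u * (Pp j).eval u) := by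
    intro u
    have hs : Real.sqrt (2 * (j:ℝ) + 1) ^ 2 = 2 * (j:ℝ) + 1 :=
      Real.sq_sqrt (by positivity)
    rw [Leg, shiftedLegendre_eq, mul_pow, hs]
    ring
  simp only [e, intervalIntegral.integral_const_mul, integral_P_diag]
  field_simp

lemma integral_Leg_zero (j : ℕ) (hj : 1 ≤ j) :
    ∫ u in (0:ℝ)..1, Leg j u = 0 := by
  have e : ∀ u : ℝ, Leg j u = Real.sqrt (2 * j + 1) * (Pp j).eval u := by
    intro u; rw [Leg, shiftedLegendre_eq]
  simp only [e, intervalIntegral.integral_const_mul, integral_P_zero hj, mul_zero]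

lemma Leg_continuous (j : ℕ) : Continuous (Leg j) := by
  have : Leg j = fun u => Real.sqrt (2 * j + 1) * (Pp j).eval u := by
    funext u; rw [Leg, shiftedLegendre_eq]
  rw [this]
  exact continuous_const.mul (Pp j).continuous

open ProbabilityTheory Filter in
lemma map_G_eq (μ : Measure ℝ) [IsProbabilityMeasure μ] (G : ℝ → ℝ)
    (hG : ∀ x, G x = (μ (Set.Iic x)).toReal) (hGcont : Continuous G) :
    μ.map G = volume.restrict (Set.Ioc (0:ℝ) 1) := by
  have hGeq : G = ⇑(cdf μ) := funext fun x => (hG x).trans (cdf_eq_real μ x).symm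
  have hmono : Monotone G := hGeq ▸ monotone_cdf μ
  have h1 : ∀ x, G x ≤ 1 := fun x => hGeq ▸ cdf_le_one μ x
  have hbot : Tendsto G atBot (nhds 0) := hGeq ▸ tendsto_cdf_atBot μ
  have htop : Tendsto G atTop (nhds 1) := hGeq ▸ tendsto_cdf_atTop μ
  have hIic : ∀ x, μ (Set.Iic x) = ENNReal.ofReal (G x) := fun x => by
    rw [hGeq]; exact (ofReal_cdf μ x).symm
  have hmeas : Measurable G := hGcont.measurable
  have hP : IsProbabilityMeasure (μ.map G) := Measure.isProbabilityMeasure_map hmeas.aemeasurable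
  have hF : IsFiniteMeasure (volume.restrict (Set.Ioc (0:ℝ) 1)) :=
    ⟨by simp [Real.volume_Ioc]⟩
  refine Measure.ext_of_Iic _ _ fun t => ?_
  rw [Measure.map_apply hmeas measurableSet_Iic]
  have hR : volume.restrict (Set.Ioc (0:ℝ) 1) (Set.Iic t) = ENNReal.ofReal (min t 1) := by
    rw [Measure.restrict_apply measurableSet_Iic]
    have hset : Set.Iic t ∩ Set.Ioc 0 1 = Set.Ioc 0 (min t 1) := by
      ext y
      simp only [Set.mem_inter_iff, Set.mem_Iic, Set.mem_Ioc, le_min_iff]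
      tauto
    rw [hset, Real.volume_Ioc, sub_zero]
  rw [hR]
  by_cases ht1 : 1 ≤ t
  · have huniv : G ⁻¹' Set.Iic t = Set.univ :=
      Set.eq_univ_of_forall fun x => le_trans (h1 x) ht1
    rw [huniv, measure_univ, min_eq_right ht1, ENNReal.ofReal_one]
  push_neg at ht1
  by_cases hne : (G ⁻¹' Set.Iic t).Nonempty
  · set S := G ⁻¹' Set.Iic t with hS
    have hclosed : IsClosed S := IsClosed.preimage hGcont isClosed_Iic
    have hbdd : BddAbove S := by
      obtain ⟨z, hz⟩ : ∃ z, t < G z := (htop.eventually (eventually_gt_nhds ht1)).exists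
      refine ⟨z, fun y hy => ?_⟩
      by_contra hyz; push_neg at hyz
      exact absurd (le_trans (hmono hyz.le) hy) (not_le.mpr hz)
    have hmem : sSup S ∈ S := hclosed.csSup_mem hne hbdd
    have hGc : G (sSup S) = t := by
      refine le_antisymm hmem ?_
      refine ge_of_tendsto (x := nhdsWithin (sSup S) (Set.Ioi (sSup S)))
        ((hGcont.tendsto (sSup S)).mono_left nhdsWithin_le_nhds) ?_
      filter_upwards [self_mem_nhdsWithin] with y hy
      have hyS : y ∉ S := fun hy' => absurd (le_csSup hbdd hy') (not_le.mpr hy)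
      exact (not_le.mp fun h => hyS (Set.mem_preimage.mpr h)).le
    have hSeq : S = Set.Iic (sSup S) := by
      ext y
      constructor
      · exact fun hy => le_csSup hbdd hy
      · intro hy
        exact Set.mem_preimage.mpr (le_trans (hmono hy) hmem)
    rw [hS] at hSeq ⊢
    rw [hSeq, hIic, hGc, min_eq_left ht1.le]
  · rw [Set.not_nonempty_iff_eq_empty.mp hne, measure_empty]
    have ht0 : t ≤ 0 := by
      by_contra hpos; push_neg at hpos
      obtain ⟨x, hx⟩ := (hbot.eventually (eventually_lt_nhds hpos)).exists
      exact hne ⟨x, Set.mem_preimage.mpr hx.le⟩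
    rw [eq_comm, ENNReal.ofReal_eq_zero]
    exact le_trans (min_le_left _ _) ht0

lemma integral_comp_G (μ : Measure ℝ) [IsProbabilityMeasure μ] (G : ℝ → ℝ)
    (hG : ∀ x, G x = (μ (Set.Iic x)).toReal) (hGcont : Continuous G)
    (f : ℝ → ℝ) (hf : Continuous f) :
    ∫ x, f (G x) ∂μ = ∫ u in (0:ℝ)..1, f u := by
  rw [← MeasureTheory.integral_map hGcont.measurable.aemeasurable hf.aestronglyMeasurable,
    map_G_eq μ G hG hGcont, intervalIntegral.integral_of_le zero_le_one]

/-- The LP score functions `T_j(x;G) = Leg_j(G(x))` are orthonormal in `L²(μ)` and,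
for `j ≥ 1`, have mean zero, when `G` is the continuous cdf of `μ`. -/
theorem lpScore_orthonormal
    (μ : Measure ℝ) [IsProbabilityMeasure μ]
    (G : ℝ → ℝ) (hG : ∀ x, G x = (μ (Set.Iic x)).toReal)
    (hGcont : Continuous G) :
    (∀ j k : ℕ, j ≠ k → ∫ x, lpScore G j x * lpScore G k x ∂μ = 0) ∧
    (∀ j : ℕ, ∫ x, (lpScore G j x) ^ 2 ∂μ = 1) ∧
    (∀ j : ℕ, 1 ≤ j → ∫ x, lpScore G j x ∂μ = 0) := by
  refine ⟨fun j k hjk => ?_, fun j => ?_, fun j hj => ?_⟩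
  · have h := integral_comp_G μ G hG hGcont (fun u => Leg j u * Leg k u)
      ((Leg_continuous j).mul (Leg_continuous k))
    exact h.trans (integral_Leg_mul j k hjk)
  · have h := integral_comp_G μ G hG hGcont (fun u => (Leg j u) ^ 2)
      ((Leg_continuous j).pow 2)
    exact h.trans (integral_Leg_sq j)
  · have h := integral_comp_G μ G hG hGcont (Leg j) (Leg_continuous j)
    exact h.trans (integral_Leg_zero j hj)
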